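/- Let n ≥ 3 and 1 ≤ k ≤ n−1 be integers, and let G be a simple connected graph on n vertices with edge connectivity κ′(G) ≤ k. Then Π1(G) ≤ k^2 · (n−1)^{2k} · (n−2)^{2(n−k−1)}, with equality if and only if G is isomorphic to K_n^k. -/

import Mathlib

open SimpleGraph Finset

/-- Degree of a vertex (as `Nat.card` of its neighbor set). -/
noncomputable def mdeg {V : Type*} (G : SimpleGraph V) (v : V) : ℕ :=
  Nat.card (G.neighborSet v)

/-- First multiplicative Zagreb index. -/
noncomputable def mZ1 {V : Type*} [Fintype V] (G : SimpleGraph V) : ℕ :=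
  ∏ v : V, (mdeg G v) ^ 2

/-- Second multiplicative Zagreb index. -/
noncomputable def mZ2 {V : Type*} [Fintype V] (G : SimpleGraph V) : ℕ :=
  ∏ v : V, (mdeg G v) ^ (mdeg G v)

/-- The edge connectivity of `G` is at most `k`: some set of at most `k` edges of `G`
disconnects it. -/
def EdgeConnAtMost {V : Type*} (G : SimpleGraph V) (k : ℕ) : Prop :=
  ∃ F : Finset (Sym2 V), (↑F : Set (Sym2 V)) ⊆ G.edgeSet ∧ F.card ≤ k ∧
    ¬ (G.deleteEdges (↑F : Set (Sym2 V))).Connected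

/-- The graph `K_n^k`: vertex `0` is joined to the first `k` vertices of the complete
graph on the remaining `n - 1` vertices. -/
def KnK (n k : ℕ) : SimpleGraph (Fin n) :=
  SimpleGraph.fromRel (fun u v => (u.val ≠ 0 ∧ v.val ≠ 0) ∨ (u.val = 0 ∧ 1 ≤ v.val ∧ v.val ≤ k))



/-- per-factor Y-side bound: `(B + d) * M ^ d ≤ M * (M+1) ^ d` when `B ≤ M`. -/
lemma ybound (B M : ℕ) (hB : B ≤ M) : ∀ d : ℕ, (B + d) * M ^ d ≤ M * (M + 1) ^ d := by
  intro d
  induction d with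
  | zero => simpa using hB
  | succ d ih =>
    have h1 : (B + (d+1)) * M ^ (d+1) = M * ((B + d) * M ^ d) + M ^ (d+1) := by ring
    have h2 : M * ((B + d) * M ^ d) + M ^ (d+1) ≤ M * (M * (M+1) ^ d) + M ^ (d+1) := by
      exact Nat.add_le_add_right (Nat.mul_le_mul_left _ ih) _
    have h3 : M * (M * (M+1) ^ d) + M ^ (d+1) ≤ M * (M+1) ^ (d+1) := by
      have : M ^ (d+1) ≤ M * (M+1)^d := by
        rw [pow_succ, mul_comm]
        exact Nat.mul_le_mul_left _ (Nat.pow_le_pow_left (Nat.le_succ M) d)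
      calc M * (M * (M+1) ^ d) + M ^ (d+1) ≤ M * (M * (M+1) ^ d) + M * (M+1)^d := by
            exact Nat.add_le_add_left this _
        _ = M * (M+1) ^ (d+1) := by ring
    omega

lemma ybound_strict (B M : ℕ) (hB : B < M) : ∀ d : ℕ, (B + d) * M ^ d < M * (M + 1) ^ d := by
  intro d
  induction d with
  | zero => simpa using hB
  | succ d ih =>
    have hM : 1 ≤ M := by omega
    have h1 : (B + (d+1)) * M ^ (d+1) = M * ((B + d) * M ^ d) + M ^ (d+1) := by ring
    have h2 : M * ((B + d) * M ^ d) < M * (M * (M+1) ^ d) := by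
      exact Nat.mul_lt_mul_of_pos_left ih (by omega : 0 < M)
    have h3 : M * (M * (M+1) ^ d) + M ^ (d+1) ≤ M * (M+1) ^ (d+1) := by
      have : M ^ (d+1) ≤ M * (M+1)^d := by
        rw [pow_succ, mul_comm]
        exact Nat.mul_le_mul_left _ (Nat.pow_le_pow_left (Nat.le_succ M) d)
      calc M * (M * (M+1) ^ d) + M ^ (d+1) ≤ M * (M * (M+1) ^ d) + M * (M+1)^d := by
            exact Nat.add_le_add_left this _
        _ = M * (M+1) ^ (d+1) := by ring
    omega

/-- arithmetic finisher for the X-side bound. -/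
lemma xfinish (A M m c0 p q : ℕ) (hpq : p + q = A) (hp : p + c0 ≤ m) (hc0 : 1 ≤ c0)
    (hc0m : c0 ≤ m) (hM : 2 * A ≤ M) :
    (A + c0) * (M ^ p * A ^ q) ≤ m * M ^ A := by
  rcases Nat.eq_zero_or_pos q with hq | hq
  · subst hq
    have hpA : p = A := by omega
    subst hpA
    simp only [pow_zero, mul_one]
    exact Nat.mul_le_mul_right _ (by omega : p + c0 ≤ m)
  rcases Nat.eq_zero_or_pos A with hA | hA
  · omega
  -- main case : A ≥ 1, q ≥ 1
  have key : A + c0 ≤ 2 ^ q * m := by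
    rcases le_or_gt (A + 1) m with hAm | hAm
    · have : A + c0 ≤ 2 * m := by omega
      have h2 : 2 ≤ 2 ^ q := by
        calc 2 = 2 ^ 1 := by norm_num
          _ ≤ 2 ^ q := Nat.pow_le_pow_right (by norm_num) hq
      calc A + c0 ≤ 2 * m := this
        _ ≤ 2 ^ q * m := Nat.mul_le_mul_right _ h2
    · -- m ≤ A, set r = A + 1 - m ≥ 1, q ≥ r
      have hr : 1 ≤ A + 1 - m := by omega
      set r := A + 1 - m with hrdef
      have hqr : r ≤ q := by omega
      have h2r : r + 1 ≤ 2 ^ r := Nat.lt_two_pow_self (n := r)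
      have : A + c0 ≤ (r + 1) * m := by
        obtain ⟨t, ht⟩ := Nat.exists_eq_add_of_le hr
        obtain ⟨s, hs⟩ := Nat.exists_eq_add_of_le (by omega : 1 ≤ m)
        have hA' : A = m + r - 1 := by omega
        have hst : (r+1)*m = (t+2)*(s+1) := by rw [ht, hs]; ring
        have hexp : (t+2)*(s+1) = t*s + t + 2*s + 2 := by ring
        omega
      calc A + c0 ≤ (r+1) * m := this
        _ ≤ 2 ^ r * m := Nat.mul_le_mul_right _ h2r
        _ ≤ 2 ^ q * m := Nat.mul_le_mul_right _ (Nat.pow_le_pow_right (by norm_num) hqr)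
  -- now finish: (A+c0) * M^p * A^q ≤ 2^q m M^p A^q ≤ m M^p (2A)^q ≤ m M^p M^q = m M^A
  have h1 : (A + c0) * (M ^ p * A ^ q) ≤ 2 ^ q * m * (M ^ p * A ^ q) :=
    Nat.mul_le_mul_right _ key
  have h2 : 2 ^ q * m * (M ^ p * A ^ q) = m * (M ^ p * ((2*A) ^ q)) := by
    rw [mul_pow]; ring
  have h3 : m * (M ^ p * ((2*A) ^ q)) ≤ m * (M ^ p * M ^ q) := by
    apply Nat.mul_le_mul_left
    apply Nat.mul_le_mul_left
    exact Nat.pow_le_pow_left hM q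
  calc (A + c0) * (M ^ p * A ^ q) ≤ 2 ^ q * m * (M ^ p * A ^ q) := h1
    _ = m * (M ^ p * ((2*A) ^ q)) := h2
    _ ≤ m * (M ^ p * M ^ q) := h3
    _ = m * M ^ A := by rw [← pow_add, hpq]

/-- X-side bound: product of `(A + c u)` over a set of size `A+1` with `∑ c = m`. -/
lemma mainX {V : Type*} [DecidableEq V] (X : Finset V) (c : V → ℕ) (A M m : ℕ)
    (hX : X.card = A + 1) (hs : ∑ u ∈ X, c u = m) (hm : 1 ≤ m)
    (hM : 2 * A ≤ M) (hmle : m ≤ M + 1) :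
    ∏ u ∈ X, (A + c u) ≤ m * M ^ A := by
  have hne : X.Nonempty := Finset.card_pos.mp (by omega)
  obtain ⟨i0, hi0X, hi0max⟩ := Finset.exists_max_image X c hne
  have hci0m : c i0 ≤ m := hs ▸ Finset.single_le_sum (fun u _ => Nat.zero_le _) hi0X
  have hsum_le : m ≤ X.card * c i0 := by
    rw [← hs]
    simpa using Finset.sum_le_card_nsmul X c (c i0) (fun u hu => hi0max u hu)
  have hci0 : 1 ≤ c i0 := by
    by_contra h
    have : c i0 = 0 := by omega
    rw [this, Nat.mul_zero] at hsum_le; omega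
  set X' := X.erase i0 with hX'
  have hX'card : X'.card = A := by
    rw [hX', Finset.card_erase_of_mem hi0X, hX]; omega
  have hadd : c i0 + ∑ u ∈ X', c u = ∑ u ∈ X, c u := by
    rw [hX']; exact Finset.add_sum_erase X c hi0X
  have hsumX' : ∑ u ∈ X', c u = m - c i0 := by omega
  set P := X'.filter (fun u => 1 ≤ c u) with hP
  set p := P.card with hp
  have hpA : p ≤ A := hX'card ▸ Finset.card_le_card (Finset.filter_subset _ _)
  have hpsum : p ≤ m - c i0 := by
    have h1 : p * 1 ≤ ∑ u ∈ P, c u := by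
      simpa using Finset.card_nsmul_le_sum P c 1 (fun u hu => (Finset.mem_filter.mp hu).2)
    have h2 : ∑ u ∈ P, c u ≤ ∑ u ∈ X', c u :=
      Finset.sum_le_sum_of_subset (Finset.filter_subset _ _)
    omega
  -- factors in P are at most M
  have hfacP : ∀ u ∈ P, A + c u ≤ M := by
    intro u hu
    by_contra h
    have hu' : u ∈ X' := (Finset.mem_filter.mp hu).1
    have huX : u ∈ X := Finset.mem_of_mem_erase hu'
    have hune : u ≠ i0 := Finset.ne_of_mem_erase hu'
    have hcu : M + 1 - A ≤ c u := by omega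
    have hci0' : c u ≤ c i0 := hi0max u huX
    have hsum2 : c u + c i0 ≤ m := by
      have := Finset.add_sum_erase X c hi0X
      have h3 : c u ≤ ∑ v ∈ X', c v := Finset.single_le_sum (fun v _ => Nat.zero_le _) hu'
      omega
    omega
  have hprodP : ∏ u ∈ P, (A + c u) ≤ M ^ p := by
    rw [hp]
    exact Finset.prod_le_pow_card P _ M hfacP
  have hQcard : (X'.filter (fun u => ¬ 1 ≤ c u)).card = A - p := by
    have h := Finset.card_filter_add_card_filter_not (s := X') (p := fun u => 1 ≤ c u)
    rw [← hP] at h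
    omega
  have hprodQ : ∏ u ∈ X'.filter (fun u => ¬ 1 ≤ c u), (A + c u) = A ^ (A - p) := by
    calc ∏ u ∈ X'.filter (fun u => ¬ 1 ≤ c u), (A + c u)
        = ∏ _u ∈ X'.filter (fun u => ¬ 1 ≤ c u), A := by
          refine Finset.prod_congr rfl (fun u hu => ?_)
          have : ¬ 1 ≤ c u := (Finset.mem_filter.mp hu).2
          omega
      _ = A ^ (A - p) := by rw [Finset.prod_const, hQcard]
  have hprodX' : ∏ u ∈ X', (A + c u) ≤ M ^ p * A ^ (A - p) := by
    rw [← Finset.prod_filter_mul_prod_filter_not X' (fun u => 1 ≤ c u), hprodQ]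
    exact Nat.mul_le_mul_right _ hprodP
  have hsplit : ∏ u ∈ X, (A + c u) = (A + c i0) * ∏ u ∈ X', (A + c u) :=
    (Finset.mul_prod_erase X _ hi0X).symm
  calc ∏ u ∈ X, (A + c u) = (A + c i0) * ∏ u ∈ X', (A + c u) := hsplit
    _ ≤ (A + c i0) * (M ^ p * A ^ (A - p)) := Nat.mul_le_mul_left _ hprodX'
    _ ≤ m * M ^ A := xfinish A M m (c i0) p (A - p) (by omega) (by omega) hci0 hci0m hM

/-- monotonicity of `j ↦ j * (M+1)^j * M^(M+1-j)`. -/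
lemma Tmono (M m k : ℕ) (hm : 1 ≤ m) (hmk : m ≤ k) (hk : k ≤ M + 1) (hM : 1 ≤ M) :
    m * (M+1)^m * M^(M+1-m) ≤ k * (M+1)^k * M^(M+1-k)
      ∧ (m < k → m * (M+1)^m * M^(M+1-m) < k * (M+1)^k * M^(M+1-k)) := by
  induction k, hmk using Nat.le_induction with
  | base => exact ⟨le_refl _, by omega⟩
  | succ j hj ih =>
    have hjM : j ≤ M := by omega
    have ihh := ih (by omega)
    have step : j * (M+1)^j * M^(M+1-j) < (j+1) * (M+1)^(j+1) * M^(M+1-(j+1)) := by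
      have e1 : M + 1 - j = (M - j) + 1 := by omega
      have e2 : M + 1 - (j + 1) = M - j := by omega
      rw [e1, e2]
      have lhs_eq : j * (M+1)^j * M^((M-j)+1) = (j * M) * ((M+1)^j * M^(M-j)) := by ring
      have rhs_eq : (j+1) * (M+1)^(j+1) * M^(M-j) = ((j+1) * (M+1)) * ((M+1)^j * M^(M-j)) := by
        ring
      rw [lhs_eq, rhs_eq]
      have hlt : j * M < (j+1) * (M+1) := by nlinarith
      have hpos : 0 < (M+1)^j * M^(M-j) :=
        Nat.mul_pos (Nat.pow_pos (by omega)) (Nat.pow_pos (by omega))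
      exact Nat.mul_lt_mul_of_lt_of_le hlt (le_refl _) hpos
    exact ⟨le_of_lt (lt_of_le_of_lt ihh.1 step), fun _ => lt_of_le_of_lt ihh.1 step⟩

/-- The core numeric bound. -/
lemma core {V : Type*} [DecidableEq V] (X Y : Finset V) (c : V → ℕ) (m k A B : ℕ)
    (hX : X.card = A + 1) (hY : Y.card = B + 1) (hAB : A ≤ B) (hB1 : 1 ≤ A + B)
    (hsX : ∑ u ∈ X, c u = m) (hsY : ∑ u ∈ Y, c u = m)
    (hm : 1 ≤ m) (hmk : m ≤ k) (hk : k ≤ A + B + 1) :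
    ((∏ u ∈ X, (A + c u)) * ∏ u ∈ Y, (B + c u) ≤
      k * (A+B+1)^k * (A+B)^(A+B+1-k)) ∧
    ((1 ≤ A ∨ m < k) → (∏ u ∈ X, (A + c u)) * ∏ u ∈ Y, (B + c u) <
      k * (A+B+1)^k * (A+B)^(A+B+1-k)) := by
  set M := A + B with hMdef
  have hMpos : 1 ≤ M := hB1
  have hxb : ∏ u ∈ X, (A + c u) ≤ m * M ^ A :=
    mainX X c A M m hX hsX hm (by omega) (by omega)
  -- Y side
  have hYfac : ∀ u ∈ Y, (B + c u) * M ^ (c u) ≤ M * (M + 1) ^ (c u) :=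
    fun u _ => ybound B M (by omega) (c u)
  have hYprod_eq : ∏ u ∈ Y, ((B + c u) * M ^ (c u)) = (∏ u ∈ Y, (B + c u)) * M ^ m := by
    rw [Finset.prod_mul_distrib, Finset.prod_pow_eq_pow_sum, hsY]
  have hYprod_rhs : ∏ u ∈ Y, (M * (M + 1) ^ (c u)) = M ^ (B + 1) * (M + 1) ^ m := by
    rw [Finset.prod_mul_distrib, Finset.prod_const, Finset.prod_pow_eq_pow_sum, hsY, hY]
  have hyb : (∏ u ∈ Y, (B + c u)) * M ^ m ≤ M ^ (B + 1) * (M + 1) ^ m := by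
    rw [← hYprod_eq, ← hYprod_rhs]
    exact Finset.prod_le_prod' hYfac
  have hybs : 1 ≤ A → (∏ u ∈ Y, (B + c u)) * M ^ m < M ^ (B + 1) * (M + 1) ^ m := by
    intro hA
    rw [← hYprod_eq, ← hYprod_rhs]
    refine Finset.prod_lt_prod_of_nonempty (fun u _ => ?_) (fun u _ => ?_) ?_
    · exact Nat.mul_pos (by omega) (Nat.pow_pos (by omega))
    · exact ybound_strict B M (by omega) (c u)
    · exact Finset.card_pos.mp (by omega)
  have hXpos : 1 ≤ A → 1 ≤ ∏ u ∈ X, (A + c u) :=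
    fun hA => Nat.one_le_iff_ne_zero.mpr (by
      simp only [Ne, Finset.prod_eq_zero_iff]
      rintro ⟨u, _, h⟩; omega)
  have hTm_eq : (m * (M+1)^m * M^(M+1-m)) * M ^ m = (m * M ^ A) * (M ^ (B + 1) * (M + 1) ^ m) := by
    have e : M + 1 - m + m = M + 1 := by omega
    have e2 : A + (B + 1) = M + 1 := by omega
    calc (m * (M+1)^m * M^(M+1-m)) * M ^ m = m * (M+1)^m * (M^(M+1-m) * M ^ m) := by ring
      _ = m * (M+1)^m * M ^ (M+1) := by rw [← pow_add, e]
      _ = (m * M ^ A) * (M ^ (B + 1) * (M + 1) ^ m) := by rw [← e2, pow_add]; ring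
  have hmain : ((∏ u ∈ X, (A + c u)) * ∏ u ∈ Y, (B + c u)) * M ^ m
      ≤ (m * (M+1)^m * M^(M+1-m)) * M ^ m := by
    rw [hTm_eq]
    calc ((∏ u ∈ X, (A + c u)) * ∏ u ∈ Y, (B + c u)) * M ^ m
        = (∏ u ∈ X, (A + c u)) * ((∏ u ∈ Y, (B + c u)) * M ^ m) := by ring
      _ ≤ (m * M ^ A) * (M ^ (B + 1) * (M + 1) ^ m) :=
          Nat.mul_le_mul hxb hyb
  have hmains : 1 ≤ A → ((∏ u ∈ X, (A + c u)) * ∏ u ∈ Y, (B + c u)) * M ^ m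
      < (m * (M+1)^m * M^(M+1-m)) * M ^ m := by
    intro hA
    rw [hTm_eq]
    calc ((∏ u ∈ X, (A + c u)) * ∏ u ∈ Y, (B + c u)) * M ^ m
        = (∏ u ∈ X, (A + c u)) * ((∏ u ∈ Y, (B + c u)) * M ^ m) := by ring
      _ < (∏ u ∈ X, (A + c u)) * (M ^ (B + 1) * (M + 1) ^ m) :=
          Nat.mul_lt_mul_of_pos_left (hybs hA) (by exact_mod_cast hXpos hA)
      _ ≤ (m * M ^ A) * (M ^ (B + 1) * (M + 1) ^ m) :=
          Nat.mul_le_mul_right _ hxb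
  have hMmpos : 0 < M ^ m := Nat.pow_pos (by omega)
  have hQTm : (∏ u ∈ X, (A + c u)) * ∏ u ∈ Y, (B + c u) ≤ m * (M+1)^m * M^(M+1-m) :=
    Nat.le_of_mul_le_mul_right hmain hMmpos
  have hQTms : 1 ≤ A → (∏ u ∈ X, (A + c u)) * ∏ u ∈ Y, (B + c u) < m * (M+1)^m * M^(M+1-m) :=
    fun hA => Nat.lt_of_mul_lt_mul_right (hmains hA)
  have hT := Tmono M m k hm hmk (by omega) hMpos
  constructor
  · exact le_trans hQTm hT.1
  · rintro (hA | hmk')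
    · exact lt_of_lt_of_le (hQTms hA) hT.1
    · exact lt_of_le_of_lt hQTm (hT.2 hmk')

open SimpleGraph

lemma mdeg_eq_degree {V : Type*} [Fintype V] (G : SimpleGraph V) [DecidableRel G.Adj] (v : V) :
    mdeg G v = G.degree v := by
  rw [mdeg, Nat.card_eq_fintype_card, SimpleGraph.card_neighborSet_eq_degree]

lemma mdeg_eq_filter {V : Type*} [Fintype V] [DecidableEq V] (G : SimpleGraph V)
    [DecidableRel G.Adj] (v : V) :
    mdeg G v = (Finset.univ.filter (G.Adj v)).card := by
  rw [mdeg_eq_degree, ← SimpleGraph.neighborFinset_eq_filter]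
  rfl

lemma cross_sum {V : Type*} [DecidableEq V] (G : SimpleGraph V) [DecidableRel G.Adj]
    (X Y : Finset V) :
    ∑ u ∈ X, (Y.filter (G.Adj u)).card = ((X ×ˢ Y).filter fun p => G.Adj p.1 p.2).card := by
  rw [Finset.card_filter, Finset.sum_product]
  exact Finset.sum_congr rfl (fun u _ => by rw [Finset.card_filter])

lemma cross_swap {V : Type*} [DecidableEq V] (G : SimpleGraph V) [DecidableRel G.Adj]
    (X Y : Finset V) :
    ((X ×ˢ Y).filter fun p => G.Adj p.1 p.2).card
      = ((Y ×ˢ X).filter fun p => G.Adj p.1 p.2).card := by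
  apply Finset.card_nbij' Prod.swap Prod.swap
  · intro p hp
    simp only [Finset.mem_coe, Finset.mem_filter, Finset.mem_product] at hp ⊢
    exact ⟨⟨hp.1.2, hp.1.1⟩, hp.2.symm⟩
  · intro p hp
    simp only [Finset.mem_coe, Finset.mem_filter, Finset.mem_product] at hp ⊢
    exact ⟨⟨hp.1.2, hp.1.1⟩, hp.2.symm⟩
  · intro p _; rfl
  · intro p _; rfl

lemma cross_exists {V : Type*} [Fintype V] [DecidableEq V] {G : SimpleGraph V}
    [DecidableRel G.Adj] (hG : G.Connected) (X : Finset V) (hX : X.Nonempty)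
    (hY : Xᶜ.Nonempty) : ∃ u ∈ X, ∃ v ∈ Xᶜ, G.Adj u v := by
  by_contra h
  push_neg at h
  obtain ⟨x, hx⟩ := hX
  obtain ⟨y, hy⟩ := hY
  have key : ∀ (s t : V) (_ : G.Walk s t), s ∈ X → t ∈ X := by
    intro s t p
    induction p with
    | nil => exact id
    | @cons u v w hadj q ih =>
      intro hu
      apply ih
      by_contra hv
      exact h u hu v (Finset.mem_compl.mpr hv) hadj
  obtain ⟨p⟩ := hG.preconnected x y
  exact Finset.mem_compl.mp hy (key x y p hx)

lemma exists_cut {V : Type*} [Fintype V] [DecidableEq V] {G : SimpleGraph V}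
    [DecidableRel G.Adj] {k : ℕ} (hG : G.Connected) (hκ : EdgeConnAtMost G k) :
    ∃ X : Finset V, X.Nonempty ∧ Xᶜ.Nonempty ∧
      ((X ×ˢ Xᶜ).filter fun p => G.Adj p.1 p.2).card ≤ k := by
  classical
  obtain ⟨F, hFsub, hFcard, hFdis⟩ := hκ
  have hpre : ¬ (G.deleteEdges (↑F : Set (Sym2 V))).Preconnected := by
    intro hp
    exact hFdis ((SimpleGraph.connected_iff _).mpr ⟨hp, hG.nonempty⟩)
  rw [SimpleGraph.Preconnected] at hpre
  push_neg at hpre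
  obtain ⟨v, w, hvw⟩ := hpre
  set G' := G.deleteEdges (↑F : Set (Sym2 V)) with hG'
  set X := Finset.univ.filter (fun u => G'.Reachable v u) with hXdef
  have hvX : v ∈ X := Finset.mem_filter.mpr ⟨Finset.mem_univ _, SimpleGraph.Reachable.refl v⟩
  have hwY : w ∈ Xᶜ := by simp [hXdef, hvw]
  refine ⟨X, ⟨v, hvX⟩, ⟨w, hwY⟩, ?_⟩
  refine le_trans (Finset.card_le_card_of_injOn (fun p => s(p.1, p.2)) ?_ ?_) hFcard
  · intro p hp
    simp only [Finset.mem_coe, Finset.mem_filter, Finset.mem_product] at hp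
    obtain ⟨⟨h1, h2⟩, hadj⟩ := hp
    by_contra hnot
    have hadj' : G'.Adj p.1 p.2 := by
      rw [hG', SimpleGraph.deleteEdges_adj]
      exact ⟨hadj, hnot⟩
    have h1' : G'.Reachable v p.1 := by
      rw [hXdef] at h1; simpa using h1
    have : p.2 ∈ X := by
      rw [hXdef]
      simp only [Finset.mem_filter, Finset.mem_univ, true_and]
      exact h1'.trans hadj'.reachable
    exact Finset.mem_compl.mp (by rwa [hXdef] at h2) (by rwa [hXdef] at this)
  · intro p hp q hq heq
    simp only [Finset.coe_filter, Set.mem_setOf_eq, Finset.mem_product] at hp hq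
    have := Sym2.eq_iff.mp heq
    rcases this with ⟨h1, h2⟩ | ⟨h1, h2⟩
    · exact Prod.ext h1 h2
    · exfalso
      have : p.1 ∈ Xᶜ := h1 ▸ hq.1.2
      exact Finset.mem_compl.mp this hp.1.1

lemma deg_pos {V : Type*} [Fintype V] [DecidableEq V] {G : SimpleGraph V}
    [DecidableRel G.Adj] (hG : G.Connected) (hn : 2 ≤ Fintype.card V) (v : V) :
    1 ≤ mdeg G v := by
  obtain ⟨w, hw⟩ := Fintype.exists_ne_of_one_lt_card (by omega) v
  obtain ⟨p⟩ := hG.preconnected v w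
  rw [mdeg_eq_filter]
  cases p with
  | nil => exact absurd rfl hw
  | @cons u b w hadj q =>
    rw [Nat.succ_le_iff, Finset.card_pos]
    exact ⟨b, Finset.mem_filter.mpr ⟨Finset.mem_univ _, hadj⟩⟩

lemma prod_eq_forced {V : Type*} {s : Finset V} {f g : V → ℕ}
    (hle : ∀ u ∈ s, f u ≤ g u) (hpos : ∀ u ∈ s, 1 ≤ f u)
    (heq : ∏ u ∈ s, f u = ∏ u ∈ s, g u) : ∀ u ∈ s, f u = g u := by
  intro u hu
  by_contra hne
  have hlt : f u < g u := lt_of_le_of_ne (hle u hu) hne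
  have := Finset.prod_lt_prod (f := f) (g := g) (fun i hi => hpos i hi) hle ⟨u, hu, hlt⟩
  omega

lemma side_bound {V : Type*} [Fintype V] [DecidableEq V] {G : SimpleGraph V} [DecidableRel G.Adj]
    {k : ℕ} (hG : G.Connected) (hn : 3 ≤ Fintype.card V) (hk2 : k ≤ Fintype.card V - 1)
    (X : Finset V) (hXne : X.Nonempty) (hYne : Xᶜ.Nonempty) (hXY : X.card ≤ Xᶜ.card)
    (hcut : ((X ×ˢ Xᶜ).filter fun p => G.Adj p.1 p.2).card ≤ k) :
    (∏ v, mdeg G v ≤ k * (Fintype.card V - 1)^k * (Fintype.card V - 2)^(Fintype.card V - 1 - k)) ∧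
    (∏ v, mdeg G v = k * (Fintype.card V - 1)^k * (Fintype.card V - 2)^(Fintype.card V - 1 - k) →
      ∃ x : V, mdeg G x = k ∧ ∀ u v : V, u ≠ x → v ≠ x → u ≠ v → G.Adj u v) := by
  set N := Fintype.card V with hN
  obtain ⟨A, hX⟩ : ∃ A, X.card = A + 1 :=
    ⟨X.card - 1, by have := Finset.card_pos.mpr hXne; omega⟩
  obtain ⟨B, hY⟩ : ∃ B, Xᶜ.card = B + 1 :=
    ⟨Xᶜ.card - 1, by have := Finset.card_pos.mpr hYne; omega⟩
  have hNsum : X.card + Xᶜ.card = N := by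
    rw [hN]; exact Finset.card_add_card_compl X
  have hAB : A ≤ B := by omega
  have hABN : A + B + 2 = N := by omega
  set c : V → ℕ := fun u =>
    if u ∈ X then (Xᶜ.filter (G.Adj u)).card else (X.filter (G.Adj u)).card with hc
  set m := ((X ×ˢ Xᶜ).filter fun p => G.Adj p.1 p.2).card with hm
  have hsX : ∑ u ∈ X, c u = m := by
    rw [hm, ← cross_sum]
    exact Finset.sum_congr rfl (fun u hu => by rw [hc]; simp [hu])
  have hsY : ∑ u ∈ Xᶜ, c u = m := by
    rw [hm, cross_swap, ← cross_sum]
    refine Finset.sum_congr rfl (fun u hu => ?_)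
    rw [hc]
    simp [Finset.mem_compl.mp hu]
  have hm1 : 1 ≤ m := by
    obtain ⟨u, hu, v, hv, hadj⟩ := cross_exists hG X hXne hYne
    rw [hm, Nat.succ_le_iff, Finset.card_pos]
    exact ⟨(u, v), Finset.mem_filter.mpr ⟨Finset.mem_product.mpr ⟨hu, hv⟩, hadj⟩⟩
  have hmk : m ≤ k := hcut
  -- degree decomposition
  have hdecomp : ∀ u : V, mdeg G u = (X.filter (G.Adj u)).card + (Xᶜ.filter (G.Adj u)).card := by
    intro u
    rw [mdeg_eq_filter, ← Finset.union_compl X, Finset.filter_union,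
      Finset.card_union_of_disjoint
        (Finset.disjoint_filter_filter disjoint_compl_right)]
  have hdX : ∀ u ∈ X, mdeg G u ≤ A + c u := by
    intro u hu
    rw [hdecomp u, hc]
    simp only [hu, if_pos]
    have : (X.filter (G.Adj u)).card ≤ A := by
      have hsub : X.filter (G.Adj u) ⊆ X.erase u := by
        intro v hv
        obtain ⟨hvX, hadj⟩ := Finset.mem_filter.mp hv
        exact Finset.mem_erase.mpr ⟨(hadj.ne).symm, hvX⟩
      calc (X.filter (G.Adj u)).card ≤ (X.erase u).card := Finset.card_le_card hsub
        _ = A := by rw [Finset.card_erase_of_mem hu, hX]; omega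
    omega
  have hdY : ∀ u ∈ Xᶜ, mdeg G u ≤ B + c u := by
    intro u hu
    rw [hdecomp u, hc]
    simp only [Finset.mem_compl.mp hu, if_neg, if_false]
    have : (Xᶜ.filter (G.Adj u)).card ≤ B := by
      have hsub : Xᶜ.filter (G.Adj u) ⊆ Xᶜ.erase u := by
        intro v hv
        obtain ⟨hvX, hadj⟩ := Finset.mem_filter.mp hv
        exact Finset.mem_erase.mpr ⟨(hadj.ne).symm, hvX⟩
      calc (Xᶜ.filter (G.Adj u)).card ≤ (Xᶜ.erase u).card := Finset.card_le_card hsub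
        _ = B := by rw [Finset.card_erase_of_mem hu, hY]; omega
    omega
  have hsplit : ∏ v, mdeg G v = (∏ u ∈ X, mdeg G u) * ∏ u ∈ Xᶜ, mdeg G u := by
    rw [← Finset.prod_union disjoint_compl_right, Finset.union_compl]
  have hXle : ∏ u ∈ X, mdeg G u ≤ ∏ u ∈ X, (A + c u) := Finset.prod_le_prod' hdX
  have hYle : ∏ u ∈ Xᶜ, mdeg G u ≤ ∏ u ∈ Xᶜ, (B + c u) := Finset.prod_le_prod' hdY
  have hcore := core X Xᶜ c m k A B hX hY hAB (by omega) hsX hsY hm1 hmk (by omega)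
  have e1 : N - 1 = A + B + 1 := by omega
  have e2 : N - 2 = A + B := by omega
  have e3 : N - 1 - k = A + B + 1 - k := by omega
  have hQle : ∏ v, mdeg G v ≤ (∏ u ∈ X, (A + c u)) * ∏ u ∈ Xᶜ, (B + c u) := by
    rw [hsplit]; exact Nat.mul_le_mul hXle hYle
  constructor
  · rw [e1, e2]
    exact le_trans hQle hcore.1
  · intro heq
    rw [e1, e2] at heq
    have hA0 : A = 0 ∧ m = k := by
      by_contra hcon
      have : 1 ≤ A ∨ m < k := by omega
      have := hcore.2 this
      omega
    obtain ⟨hA0, hmkeq⟩ := hA0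
    -- products must be equal termwise
    have hdpos : ∀ u : V, 1 ≤ mdeg G u := deg_pos hG (by omega)
    have hXpos : 1 ≤ ∏ u ∈ X, mdeg G u := Finset.one_le_prod' (fun u _ => hdpos u)
    have hYpos : 1 ≤ ∏ u ∈ Xᶜ, mdeg G u := Finset.one_le_prod' (fun u _ => hdpos u)
    have hQeq : (∏ u ∈ X, mdeg G u) * ∏ u ∈ Xᶜ, mdeg G u
        = (∏ u ∈ X, (A + c u)) * ∏ u ∈ Xᶜ, (B + c u) := by
      have h1 := hcore.1
      rw [hsplit] at heq
      omega
    have hXeq : ∏ u ∈ X, mdeg G u = ∏ u ∈ X, (A + c u) := by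
      by_contra hne
      have h1 : ∏ u ∈ X, mdeg G u < ∏ u ∈ X, (A + c u) := lt_of_le_of_ne hXle hne
      have := Nat.mul_lt_mul_of_lt_of_le h1 hYle (by omega)
      omega
    have hYeq : ∏ u ∈ Xᶜ, mdeg G u = ∏ u ∈ Xᶜ, (B + c u) := by
      have h2 : 0 < ∏ u ∈ X, (A + c u) := by
        calc 0 < ∏ u ∈ X, mdeg G u := hXpos
          _ ≤ _ := hXle
      rw [hXeq] at hQeq
      exact Nat.eq_of_mul_eq_mul_left h2 hQeq
    have htX := prod_eq_forced hdX (fun u _ => hdpos u) hXeq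
    have htY := prod_eq_forced hdY (fun u _ => hdpos u) hYeq
    -- X is a singleton
    obtain ⟨x, hx⟩ : ∃ x, X = {x} := Finset.card_eq_one.mp (by omega)
    have hxX : x ∈ X := by rw [hx]; exact Finset.mem_singleton_self x
    refine ⟨x, ?_, ?_⟩
    · -- mdeg x = k
      have h1 := htX x hxX
      have h2 : c x = m := by
        rw [← hsX, hx, Finset.sum_singleton]
      omega
    · intro u v hu hv huv
      have huY : u ∈ Xᶜ := Finset.mem_compl.mpr (by rw [hx]; simpa using hu)
      have hvY : v ∈ Xᶜ := Finset.mem_compl.mpr (by rw [hx]; simpa using hv)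
      have h1 := htY u huY
      rw [hdecomp u, hc] at h1
      simp only [Finset.mem_compl.mp huY, if_neg, if_false] at h1
      have h2 : (Xᶜ.filter (G.Adj u)).card = B := by omega
      have hsub : Xᶜ.filter (G.Adj u) ⊆ Xᶜ.erase u := by
        intro z hz
        obtain ⟨hzX, hadj⟩ := Finset.mem_filter.mp hz
        exact Finset.mem_erase.mpr ⟨(hadj.ne).symm, hzX⟩
      have hcards : (Xᶜ.erase u).card ≤ (Xᶜ.filter (G.Adj u)).card := by
        rw [h2, Finset.card_erase_of_mem huY, hY]; omega
      have hset : Xᶜ.filter (G.Adj u) = Xᶜ.erase u :=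
        Finset.eq_of_subset_of_card_le hsub hcards
      have : v ∈ Xᶜ.filter (G.Adj u) := by
        rw [hset]
        exact Finset.mem_erase.mpr ⟨huv.symm, hvY⟩
      exact (Finset.mem_filter.mp this).2

lemma card_val_range (n a b : ℕ) (hbn : b < n) :
    ((Finset.univ : Finset (Fin n)).filter (fun v => a ≤ v.val ∧ v.val ≤ b)).card = b + 1 - a := by
  rw [← Nat.card_Icc a b]
  apply Finset.card_bij (fun v _ => v.val)
  · intro v hv
    simp only [Finset.mem_filter] at hv
    exact Finset.mem_Icc.mpr ⟨hv.2.1, hv.2.2⟩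
  · intro v hv w hw h
    exact Fin.val_injective h
  · intro j hj
    obtain ⟨h1, h2⟩ := Finset.mem_Icc.mp hj
    exact ⟨⟨j, by omega⟩, Finset.mem_filter.mpr ⟨Finset.mem_univ _, h1, h2⟩, rfl⟩

lemma knk_adj {n k : ℕ} {u v : Fin n} : (KnK n k).Adj u v ↔ u ≠ v ∧
    ((u.val ≠ 0 ∧ v.val ≠ 0) ∨ (u.val = 0 ∧ 1 ≤ v.val ∧ v.val ≤ k) ∨
      (v.val = 0 ∧ 1 ≤ u.val ∧ u.val ≤ k)) := by
  unfold KnK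
  rw [SimpleGraph.fromRel_adj]
  constructor <;> rintro ⟨h1, h2⟩ <;> exact ⟨h1, by tauto⟩

lemma knk_mdeg_zero {n k : ℕ} (hk2 : k ≤ n - 1) (hn : 1 ≤ n) (u : Fin n) (hu : u.val = 0) :
    mdeg (KnK n k) u = k := by
  classical
  rw [mdeg_eq_filter]
  have : Finset.univ.filter ((KnK n k).Adj u)
      = Finset.univ.filter (fun v : Fin n => 1 ≤ v.val ∧ v.val ≤ k) := by
    apply Finset.filter_congr
    intro v _
    rw [knk_adj]
    constructor
    · rintro ⟨h1, (⟨h2, _⟩ | ⟨_, h3⟩ | ⟨h2, h3, _⟩)⟩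
      · exact absurd hu h2
      · exact h3
      · omega
    · rintro ⟨h1, h2⟩
      refine ⟨?_, Or.inr (Or.inl ⟨hu, h1, h2⟩)⟩
      intro h; rw [h] at hu; omega
  rw [this, card_val_range n 1 k (by omega)]
  omega

lemma knk_mdeg_mid {n k : ℕ} (u : Fin n) (hu1 : 1 ≤ u.val) (hu2 : u.val ≤ k) :
    mdeg (KnK n k) u = n - 1 := by
  classical
  rw [mdeg_eq_filter]
  have : Finset.univ.filter ((KnK n k).Adj u) = Finset.univ.erase u := by
    ext v
    simp only [Finset.mem_filter, Finset.mem_univ, true_and, Finset.mem_erase, and_true]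
    rw [knk_adj]
    constructor
    · rintro ⟨h1, _⟩; exact h1.symm
    · intro hvu
      refine ⟨hvu.symm, ?_⟩
      rcases Nat.eq_zero_or_pos v.val with h0 | h0
      · exact Or.inr (Or.inr ⟨h0, hu1, hu2⟩)
      · exact Or.inl ⟨by omega, by omega⟩
  rw [this, Finset.card_erase_of_mem (Finset.mem_univ _), Finset.card_univ, Fintype.card_fin]

lemma knk_mdeg_high {n k : ℕ} (u : Fin n) (hu : k + 1 ≤ u.val) :
    mdeg (KnK n k) u = n - 2 := by
  classical
  rw [mdeg_eq_filter]
  have : Finset.univ.filter ((KnK n k).Adj u)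
      = (Finset.univ.filter (fun v : Fin n => 1 ≤ v.val ∧ v.val ≤ n - 1)).erase u := by
    ext v
    have hvn : v.val ≤ n - 1 := by have := v.isLt; omega
    simp only [Finset.mem_filter, Finset.mem_univ, true_and, Finset.mem_erase]
    rw [knk_adj]
    constructor
    · rintro ⟨h1, (⟨_, h2⟩ | ⟨h2, _⟩ | ⟨_, _, h3⟩)⟩
      · exact ⟨h1.symm, by omega, hvn⟩
      · omega
      · omega
    · rintro ⟨hvu, h1, _⟩
      exact ⟨hvu.symm, Or.inl ⟨by omega, by omega⟩⟩
  have hmem : u ∈ Finset.univ.filter (fun v : Fin n => 1 ≤ v.val ∧ v.val ≤ n - 1) :=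
    Finset.mem_filter.mpr ⟨Finset.mem_univ _, by omega, by have := u.isLt; omega⟩
  rw [this, Finset.card_erase_of_mem hmem, card_val_range n 1 (n-1) (by have := u.isLt; omega)]
  omega

lemma knk_prod {n k : ℕ} (hn : 3 ≤ n) (hk2 : k ≤ n - 1) :
    ∏ v : Fin n, mdeg (KnK n k) v = k * (n-1)^k * (n-2)^(n-1-k) := by
  classical
  have step1 : ∏ v : Fin n, mdeg (KnK n k) v
      = ∏ v : Fin n, (if v.val = 0 then k else if v.val ≤ k then n-1 else n-2) := by
    refine Finset.prod_congr rfl (fun v _ => ?_)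
    split_ifs with h1 h2
    · exact knk_mdeg_zero hk2 (by omega) v h1
    · exact knk_mdeg_mid v (by omega) h2
    · exact knk_mdeg_high v (by omega)
  rw [step1, ← Finset.prod_filter_mul_prod_filter_not Finset.univ (fun v : Fin n => v.val = 0)]
  have c0 : (Finset.univ.filter (fun v : Fin n => v.val = 0)).card = 1 := by
    rw [Finset.filter_congr (fun (v : Fin n) _ =>
      (by omega : v.val = 0 ↔ 0 ≤ v.val ∧ v.val ≤ 0)), card_val_range n 0 0 (by omega)]
  have p0 : ∏ v ∈ Finset.univ.filter (fun v : Fin n => v.val = 0),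
      (if v.val = 0 then k else if v.val ≤ k then n-1 else n-2) = k := by
    rw [Finset.prod_congr rfl (fun v hv => ?_), Finset.prod_const, c0, pow_one]
    rw [if_pos (Finset.mem_filter.mp hv).2]
  rw [p0, ← Finset.prod_filter_mul_prod_filter_not
    (Finset.univ.filter (fun v : Fin n => ¬ v.val = 0)) (fun v : Fin n => v.val ≤ k)]
  have hs1 : (Finset.univ.filter (fun v : Fin n => ¬ v.val = 0)).filter (fun v => v.val ≤ k)
      = Finset.univ.filter (fun v : Fin n => 1 ≤ v.val ∧ v.val ≤ k) := by
    rw [Finset.filter_filter]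
    exact Finset.filter_congr (fun v _ => by omega)
  have hs2 : (Finset.univ.filter (fun v : Fin n => ¬ v.val = 0)).filter (fun v => ¬ v.val ≤ k)
      = Finset.univ.filter (fun v : Fin n => k + 1 ≤ v.val ∧ v.val ≤ n - 1) := by
    rw [Finset.filter_filter]
    refine Finset.filter_congr (fun v _ => ?_)
    have := v.isLt; constructor <;> intro h <;> omega
  have p1 : ∏ v ∈ (Finset.univ.filter (fun v : Fin n => ¬ v.val = 0)).filter
      (fun v => v.val ≤ k), (if v.val = 0 then k else if v.val ≤ k then n-1 else n-2)
      = (n-1)^k := by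
    have e : ∏ v ∈ (Finset.univ.filter (fun v : Fin n => ¬ v.val = 0)).filter
        (fun v => v.val ≤ k), (if v.val = 0 then k else if v.val ≤ k then n-1 else n-2)
        = ∏ _v ∈ (Finset.univ.filter (fun v : Fin n => ¬ v.val = 0)).filter
        (fun v => v.val ≤ k), (n-1) := by
      refine Finset.prod_congr rfl (fun v hv => ?_)
      have h := Finset.mem_filter.mp hv
      have h2 := Finset.mem_filter.mp h.1
      rw [if_neg h2.2, if_pos h.2]
    rw [e, Finset.prod_const, hs1, card_val_range n 1 k (by omega)]
    congr 1
  have p2 : ∏ v ∈ (Finset.univ.filter (fun v : Fin n => ¬ v.val = 0)).filter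
      (fun v => ¬ v.val ≤ k), (if v.val = 0 then k else if v.val ≤ k then n-1 else n-2)
      = (n-2)^(n-1-k) := by
    have e : ∏ v ∈ (Finset.univ.filter (fun v : Fin n => ¬ v.val = 0)).filter
        (fun v => ¬ v.val ≤ k), (if v.val = 0 then k else if v.val ≤ k then n-1 else n-2)
        = ∏ _v ∈ (Finset.univ.filter (fun v : Fin n => ¬ v.val = 0)).filter
        (fun v => ¬ v.val ≤ k), (n-2) := by
      refine Finset.prod_congr rfl (fun v hv => ?_)
      have h := Finset.mem_filter.mp hv
      have h2 := Finset.mem_filter.mp h.1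
      rw [if_neg h2.2, if_neg h.2]
    rw [e, Finset.prod_const, hs2, card_val_range n (k+1) (n-1) (by omega)]
    congr 1
    omega
  rw [p1, p2]
  ring

lemma mdeg_iso {V W : Type*} {G : SimpleGraph V} {H : SimpleGraph W} (e : G ≃g H) (v : V) :
    mdeg G v = mdeg H (e v) :=
  Nat.card_congr (e.mapNeighborSet v)

lemma prod_mdeg_iso {V W : Type*} [Fintype V] [Fintype W] {G : SimpleGraph V}
    {H : SimpleGraph W} (e : G ≃g H) :
    ∏ v, mdeg G v = ∏ w, mdeg H w :=
  Fintype.prod_equiv e.toEquiv _ _ (fun v => mdeg_iso e v)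

lemma build_iso {n k : ℕ} (hn : 3 ≤ n) (hk2 : k ≤ n - 1)
    (G : SimpleGraph (Fin n)) [DecidableRel G.Adj] (x : Fin n)
    (hdeg : (Finset.univ.filter (G.Adj x)).card = k)
    (hcomp : ∀ u v : Fin n, u ≠ x → v ≠ x → u ≠ v → G.Adj u v) :
    Nonempty (G ≃g KnK n k) := by
  classical
  set s := Finset.univ.filter (G.Adj x) with hs
  set s' := Finset.univ.filter (fun v : Fin n => 1 ≤ v.val ∧ v.val ≤ k) with hs'
  set t := Finset.univ \ insert x s with ht
  set t' := Finset.univ.filter (fun v : Fin n => k + 1 ≤ v.val ∧ v.val ≤ n - 1) with ht'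
  have hxs : x ∉ s := by
    rw [hs]
    simp [G.irrefl]
  have hscard : s.card = k := hdeg
  have hs'card : s'.card = k := by
    rw [hs', card_val_range n 1 k (by omega)]; omega
  have htcard : t.card = n - 1 - k := by
    rw [ht, Finset.card_sdiff_of_subset (Finset.subset_univ _), Finset.card_insert_of_notMem hxs,
      hscard, Finset.card_univ, Fintype.card_fin]
    omega
  have ht'card : t'.card = n - 1 - k := by
    rw [ht', card_val_range n (k+1) (n-1) (by omega)]; omega
  have htmem : ∀ u : Fin n, u ≠ x → u ∉ s → u ∈ t := by
    intro u h1 h2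
    rw [ht, Finset.mem_sdiff]
    refine ⟨Finset.mem_univ _, ?_⟩
    rw [Finset.mem_insert]
    tauto
  set e1 := Finset.equivOfCardEq (hscard.trans hs'card.symm) with he1
  set e2 := Finset.equivOfCardEq (htcard.trans ht'card.symm) with he2
  set f : Fin n → Fin n := fun u =>
    if hu : u = x then ⟨0, by omega⟩
    else if hus : u ∈ s then (e1 ⟨u, hus⟩ : Fin n)
    else (e2 ⟨u, htmem u hu hus⟩ : Fin n) with hf
  have hfx : f x = (⟨0, by omega⟩ : Fin n) := by rw [hf]; simp
  have hfs : ∀ u (hus : u ∈ s), f u = (e1 ⟨u, hus⟩ : Fin n) := by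
    intro u hus
    have hux : u ≠ x := fun h => hxs (h ▸ hus)
    rw [hf]
    simp [hux, hus]
  have hft : ∀ u (h1 : u ≠ x) (h2 : u ∉ s), f u = (e2 ⟨u, htmem u h1 h2⟩ : Fin n) := by
    intro u h1 h2
    rw [hf]
    simp [h1, h2]
  have hfs' : ∀ u (hus : u ∈ s), f u ∈ s' := by
    intro u hus; rw [hfs u hus]; exact (e1 ⟨u, hus⟩).2
  have hft' : ∀ u (h1 : u ≠ x) (h2 : u ∉ s), f u ∈ t' := by
    intro u h1 h2; rw [hft u h1 h2]; exact (e2 ⟨u, htmem u h1 h2⟩).2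
  have hs'val : ∀ v : Fin n, v ∈ s' → 1 ≤ v.val ∧ v.val ≤ k := by
    intro v hv; exact (Finset.mem_filter.mp hv).2
  have ht'val : ∀ v : Fin n, v ∈ t' → k + 1 ≤ v.val := by
    intro v hv; exact (Finset.mem_filter.mp hv).2.1
  -- injectivity
  have hinj : Function.Injective f := by
    intro u v huv
    by_cases hu : u = x <;> by_cases hv : v = x
    · rw [hu, hv]
    · exfalso
      rw [hu, hfx] at huv
      by_cases hvs : v ∈ s
      · have := hs'val _ (hfs' v hvs); rw [← huv] at this; simp at this
      · have := ht'val _ (hft' v hv hvs); rw [← huv] at this; simp at this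
    · exfalso
      rw [hv, hfx] at huv
      by_cases hus : u ∈ s
      · have := hs'val _ (hfs' u hus); rw [huv] at this; simp at this
      · have := ht'val _ (hft' u hu hus); rw [huv] at this; simp at this
    · by_cases hus : u ∈ s <;> by_cases hvs : v ∈ s
      · rw [hfs u hus, hfs v hvs] at huv
        have := e1.injective (Subtype.coe_injective huv)
        exact Subtype.mk_eq_mk.mp this
      · exfalso
        have h1 := hs'val _ (hfs' u hus)
        have h2 := ht'val _ (hft' v hv hvs)
        rw [huv] at h1; omega
      · exfalso
        have h1 := ht'val _ (hft' u hu hus)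
        have h2 := hs'val _ (hfs' v hvs)
        rw [huv] at h1; omega
      · rw [hft u hu hus, hft v hv hvs] at huv
        have := e2.injective (Subtype.coe_injective huv)
        exact Subtype.mk_eq_mk.mp this
  have hbij : Function.Bijective f := Finite.injective_iff_bijective.mp hinj
  -- the zero-vertex facts
  have hval0 : ∀ u : Fin n, u ≠ x → (f u).val ≠ 0 := by
    intro u hu
    by_cases hus : u ∈ s
    · have := hs'val _ (hfs' u hus); omega
    · have := ht'val _ (hft' u hu hus); omega
  have hadj0 : ∀ v : Fin n, v ≠ x → ((KnK n k).Adj (f x) (f v) ↔ G.Adj x v) := by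
    intro v hv
    rw [hfx, knk_adj]
    constructor
    · rintro ⟨h1, (⟨h2, _⟩ | ⟨_, h3, h4⟩ | ⟨h2, h3, _⟩)⟩
      · simp at h2
      · by_cases hvs : v ∈ s
        · exact (Finset.mem_filter.mp (hs ▸ hvs)).2
        · have := ht'val _ (hft' v hv hvs); omega
      · simp at h3
    · intro hadj
      have hvs : v ∈ s := by rw [hs]; exact Finset.mem_filter.mpr ⟨Finset.mem_univ _, hadj⟩
      have h1 := hs'val _ (hfs' v hvs)
      refine ⟨?_, Or.inr (Or.inl ⟨rfl, h1⟩)⟩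
      intro h
      have := hval0 v hv
      rw [← h] at this
      simp at this
  refine ⟨⟨Equiv.ofBijective f hbij, ?_⟩⟩
  intro u v
  show (KnK n k).Adj (f u) (f v) ↔ G.Adj u v
  by_cases huv : u = v
  · subst huv
    simp [SimpleGraph.irrefl]
  by_cases hu : u = x
  · subst hu
    exact hadj0 v (fun h => huv h.symm)
  by_cases hv : v = x
  · subst hv
    rw [SimpleGraph.adj_comm, SimpleGraph.adj_comm (G := G)]
    exact hadj0 u hu
  · constructor
    · intro _; exact hcomp u v hu hv huv
    · intro _
      rw [knk_adj]
      exact ⟨fun h => huv (hinj h), Or.inl ⟨hval0 u hu, hval0 v hv⟩⟩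

theorem stmt2 (n k : ℕ) (hn : 3 ≤ n) (hk1 : 1 ≤ k) (hk2 : k ≤ n - 1)
    (G : SimpleGraph (Fin n)) (hG : G.Connected) (hκ' : EdgeConnAtMost G k) :
    mZ1 G ≤ k ^ 2 * (n - 1) ^ (2 * k) * (n - 2) ^ (2 * (n - k - 1)) ∧
      (mZ1 G = k ^ 2 * (n - 1) ^ (2 * k) * (n - 2) ^ (2 * (n - k - 1)) ↔
        Nonempty (G ≃g KnK n k)) := by
  classical
  have hcard : Fintype.card (Fin n) = n := Fintype.card_fin n
  letI : DecidableRel G.Adj := Classical.decRel _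
  obtain ⟨X0, hX0ne, hX0cne, hX0cut⟩ := exists_cut hG hκ'
  have hside : (∏ v, mdeg G v ≤ k * (n-1)^k * (n-2)^(n-1-k)) ∧
      (∏ v, mdeg G v = k * (n-1)^k * (n-2)^(n-1-k) →
        ∃ x : Fin n, mdeg G x = k ∧ ∀ u v : Fin n, u ≠ x → v ≠ x → u ≠ v → G.Adj u v) := by
    by_cases hcmp : X0.card ≤ X0ᶜ.card
    · have h := side_bound hG (by rw [hcard]; exact hn) (by rw [hcard]; exact hk2)
        X0 hX0ne hX0cne hcmp hX0cut
      rw [hcard] at h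
      exact h
    · have hX0c : X0ᶜᶜ = X0 := compl_compl X0
      have hswap : ((X0ᶜ ×ˢ X0ᶜᶜ).filter fun p => G.Adj p.1 p.2).card ≤ k := by
        rw [hX0c, cross_swap]
        exact hX0cut
      have h := side_bound hG (by rw [hcard]; exact hn) (by rw [hcard]; exact hk2)
        X0ᶜ hX0cne (by rw [hX0c]; exact hX0ne)
        (by rw [hX0c]; omega) hswap
      rw [hcard] at h
      exact h
  have hmZ : mZ1 G = (∏ v, mdeg G v)^2 := by rw [mZ1, Finset.prod_pow]
  have hRHS : k^2 * (n - 1)^(2*k) * (n - 2)^(2*(n - k - 1))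
      = (k * (n-1)^k * (n-2)^(n-1-k))^2 := by
    have e : n - k - 1 = n - 1 - k := by omega
    rw [e]
    ring
  refine ⟨?_, ?_, ?_⟩
  · rw [hmZ, hRHS]
    exact Nat.pow_le_pow_left hside.1 2
  · intro heq
    rw [hmZ, hRHS] at heq
    have hprod : ∏ v, mdeg G v = k * (n-1)^k * (n-2)^(n-1-k) :=
      Nat.pow_left_injective (by norm_num) heq
    obtain ⟨x, hxdeg, hcomp⟩ := hside.2 hprod
    have hxdeg' : (Finset.univ.filter (G.Adj x)).card = k := by
      rw [← mdeg_eq_filter]; exact hxdeg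
    exact build_iso hn hk2 G x hxdeg' hcomp
  · rintro ⟨e⟩
    rw [hmZ, hRHS, prod_mdeg_iso e, knk_prod hn hk2]
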